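/- Let n = 2, p ∈ (0,2), α = 2/(2−p). With u(x,y) = y^α φ(e^x y^β), the equation det D²u = u^p on {(x,y): y>0} is equivalent to the ODE r² φ''(r)[α(α−1)φ − β r φ'] = −α(α−1) r φ φ' + (α²+β) r²(φ')² + φ^p for r = e^x y^β, provided αp = 2α − 2 (which holds exactly when α = 2/(2−p)). -/

import Mathlib

open Real

lemma aux_main (p α β : ℝ) (hscal : α * p = 2 * α - 2)
    (φ : ℝ → ℝ)
    (hφpos : ∀ r > (0 : ℝ), 0 < φ r)
    (hd1 : ∀ r > (0:ℝ), HasDerivAt φ (deriv φ r) r)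
    (hd2 : ∀ r > (0:ℝ), HasDerivAt (deriv φ) (deriv (deriv φ) r) r)
    (u : ℝ → ℝ → ℝ) (hu : ∀ x y, u x y = y ^ α * φ (Real.exp x * y ^ β))
    (x y : ℝ) (hy : 0 < y) :
    (deriv (deriv (fun t => u t y)) x * deriv (deriv (u x)) y -
        (deriv (fun t => deriv (u t) y) x) ^ 2 = u x y ^ p) ↔
    ((Real.exp x * y ^ β) ^ 2 * deriv (deriv φ) (Real.exp x * y ^ β) *
        (α * (α - 1) * φ (Real.exp x * y ^ β) - β * (Real.exp x * y ^ β) * deriv φ (Real.exp x * y ^ β)) =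
      -(α * (α - 1)) * (Real.exp x * y ^ β) * φ (Real.exp x * y ^ β) * deriv φ (Real.exp x * y ^ β) +
        (α ^ 2 + β) * (Real.exp x * y ^ β) ^ 2 * (deriv φ (Real.exp x * y ^ β)) ^ 2 +
        φ (Real.exp x * y ^ β) ^ p) := by
  have hb : (0:ℝ) < y ^ β := rpow_pos_of_pos hy β
  have hEpos : ∀ t : ℝ, 0 < Real.exp t * y ^ β := fun t => mul_pos (exp_pos t) hb
  set r : ℝ := Real.exp x * y ^ β with hrdef
  have hr : 0 < r := hEpos x
  have hE : ∀ t : ℝ, HasDerivAt (fun t => Real.exp t * y ^ β) (Real.exp t * y ^ β) t :=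
    fun t => (Real.hasDerivAt_exp t).mul_const _
  -- Step A : first x-derivative
  have hA : ∀ t : ℝ, deriv (fun t => u t y) t
      = y ^ α * (deriv φ (Real.exp t * y ^ β) * (Real.exp t * y ^ β)) := by
    intro t
    have h2 : HasDerivAt (fun t => φ (Real.exp t * y ^ β))
        (deriv φ (Real.exp t * y ^ β) * (Real.exp t * y ^ β)) t :=
      (hd1 _ (hEpos t)).comp t (hE t)
    have h3 := h2.const_mul (y ^ α)
    have he : (fun t => u t y) = fun t => y ^ α * φ (Real.exp t * y ^ β) := by
      funext t; exact hu t y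
    rw [he]; exact h3.deriv
  -- Step B : uxx
  have hB : deriv (deriv (fun t => u t y)) x
      = y ^ α * (deriv (deriv φ) r * r * r + deriv φ r * r) := by
    have he : deriv (fun t => u t y)
        = fun t => y ^ α * (deriv φ (Real.exp t * y ^ β) * (Real.exp t * y ^ β)) := funext hA
    rw [he]
    have h2 : HasDerivAt (fun t => deriv φ (Real.exp t * y ^ β))
        (deriv (deriv φ) r * r) x := by
      have := (hd2 _ hr).comp x (hE x); exact this
    have h3 := (h2.mul (hE x)).const_mul (y ^ α)
    simpa using h3.deriv
  -- Step C : first y-derivative (any base point, any z > 0)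
  have hC : ∀ t : ℝ, ∀ z > (0:ℝ), deriv (u t) z
      = α * z ^ (α - 1) * φ (Real.exp t * z ^ β)
        + z ^ α * (deriv φ (Real.exp t * z ^ β) * (Real.exp t * (β * z ^ (β - 1)))) := by
    intro t z hz
    have hz1 : HasDerivAt (fun z : ℝ => z ^ α) (α * z ^ (α - 1)) z :=
      Real.hasDerivAt_rpow_const (Or.inl hz.ne')
    have hz2 : HasDerivAt (fun z : ℝ => Real.exp t * z ^ β)
        (Real.exp t * (β * z ^ (β - 1))) z :=
      (Real.hasDerivAt_rpow_const (Or.inl hz.ne')).const_mul (Real.exp t)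
    have hz3 : HasDerivAt (fun z => φ (Real.exp t * z ^ β))
        (deriv φ (Real.exp t * z ^ β) * (Real.exp t * (β * z ^ (β - 1)))) z :=
      (hd1 _ (mul_pos (exp_pos t) (rpow_pos_of_pos hz β))).comp z hz2
    have h4 := hz1.mul hz3
    have he : u t = fun z => (fun z : ℝ => z ^ α) z * (fun z => φ (Real.exp t * z ^ β)) z := by
      funext z; exact hu t z
    rw [he]
    exact h4.deriv
  -- Step D : uyy
  have hD : deriv (deriv (u x)) y
      = (α * ((α - 1) * y ^ (α - 1 - 1))) * φ r
        + α * y ^ (α - 1) * (deriv φ r * (Real.exp x * (β * y ^ (β - 1))))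
        + ((α * y ^ (α - 1)) * (deriv φ r * (Real.exp x * (β * y ^ (β - 1))))
          + y ^ α * ((deriv (deriv φ) r * (Real.exp x * (β * y ^ (β - 1)))) * (Real.exp x * (β * y ^ (β - 1)))
            + deriv φ r * (Real.exp x * (β * ((β - 1) * y ^ (β - 1 - 1)))))) := by
    have heq : deriv (u x) =ᶠ[nhds y] fun z =>
        α * z ^ (α - 1) * φ (Real.exp x * z ^ β)
          + z ^ α * (deriv φ (Real.exp x * z ^ β) * (Real.exp x * (β * z ^ (β - 1)))) :=
      Filter.eventuallyEq_of_mem (Ioi_mem_nhds hy) (fun z hz => hC x z hz)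
    rw [heq.deriv_eq]
    have hz2 : HasDerivAt (fun z : ℝ => Real.exp x * z ^ β)
        (Real.exp x * (β * y ^ (β - 1))) y :=
      (Real.hasDerivAt_rpow_const (Or.inl hy.ne')).const_mul (Real.exp x)
    have hφc : HasDerivAt (fun z => φ (Real.exp x * z ^ β))
        (deriv φ r * (Real.exp x * (β * y ^ (β - 1)))) y :=
      (hd1 _ hr).comp y hz2
    have hc1 : HasDerivAt (fun z : ℝ => α * z ^ (α - 1))
        (α * ((α - 1) * y ^ (α - 1 - 1))) y :=
      (Real.hasDerivAt_rpow_const (Or.inl hy.ne')).const_mul α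
    have ht1 := hc1.mul hφc
    have hm : HasDerivAt (fun z => deriv φ (Real.exp x * z ^ β))
        (deriv (deriv φ) r * (Real.exp x * (β * y ^ (β - 1)))) y :=
      by have := (hd2 _ hr).comp y hz2; exact this
    have hn : HasDerivAt (fun z : ℝ => Real.exp x * (β * z ^ (β - 1)))
        (Real.exp x * (β * ((β - 1) * y ^ (β - 1 - 1)))) y :=
      (((Real.hasDerivAt_rpow_const (Or.inl hy.ne')).const_mul β).const_mul (Real.exp x))
    have hh := hm.mul hn
    have hz1 : HasDerivAt (fun z : ℝ => z ^ α) (α * y ^ (α - 1)) y :=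
      Real.hasDerivAt_rpow_const (Or.inl hy.ne')
    have ht2 := hz1.mul hh
    have htot := ht1.add ht2
    exact htot.deriv
  -- Step E : uxy
  have hEE : deriv (fun t => deriv (u t) y) x
      = α * y ^ (α - 1) * (deriv φ r * r)
        + y ^ α * ((deriv (deriv φ) r * r) * (Real.exp x * (β * y ^ (β - 1)))
          + deriv φ r * (Real.exp x * (β * y ^ (β - 1)))) := by
    have he : (fun t => deriv (u t) y) = fun t =>
        α * y ^ (α - 1) * φ (Real.exp t * y ^ β)
          + y ^ α * (deriv φ (Real.exp t * y ^ β) * (Real.exp t * (β * y ^ (β - 1)))) := by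
      funext t; exact hC t y hy
    rw [he]
    have hφc : HasDerivAt (fun t => φ (Real.exp t * y ^ β)) (deriv φ r * r) x :=
      (hd1 _ hr).comp x (hE x)
    have ht1 := hφc.const_mul (α * y ^ (α - 1))
    have hm : HasDerivAt (fun t => deriv φ (Real.exp t * y ^ β))
        (deriv (deriv φ) r * r) x := by
      have := (hd2 _ hr).comp x (hE x); exact this
    have hn : HasDerivAt (fun t : ℝ => Real.exp t * (β * y ^ (β - 1)))
        (Real.exp x * (β * y ^ (β - 1))) x := (Real.hasDerivAt_exp x).mul_const _
    have ht2 := (hm.mul hn).const_mul (y ^ α)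
    have htot := ht1.add ht2
    exact htot.deriv
  -- power rewrites
  have p1 : y ^ (α - 1) = y ^ α / y := by rw [Real.rpow_sub hy, Real.rpow_one]
  have p2 : y ^ (α - 1 - 1) = y ^ α / y / y := by
    rw [Real.rpow_sub hy, Real.rpow_sub hy, Real.rpow_one]
  have p3 : y ^ (β - 1) = y ^ β / y := by rw [Real.rpow_sub hy, Real.rpow_one]
  have p4 : y ^ (β - 1 - 1) = y ^ β / y / y := by
    rw [Real.rpow_sub hy, Real.rpow_sub hy, Real.rpow_one]
  have hup : u x y ^ p = y ^ α * y ^ α / (y * y) * φ r ^ p := by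
    rw [hu]
    rw [Real.mul_rpow (Real.rpow_nonneg hy.le α) (hφpos r hr).le]
    congr 1
    rw [← Real.rpow_mul hy.le α p, hscal,
      show (2 * α - 2 : ℝ) = α + α - 1 - 1 by ring,
      Real.rpow_sub hy, Real.rpow_sub hy, Real.rpow_add hy, Real.rpow_one, div_div]
  have hfac : y ^ α * y ^ α / (y * y) ≠ 0 := by positivity
  have key : deriv (deriv (fun t => u t y)) x * deriv (deriv (u x)) y -
        (deriv (fun t => deriv (u t) y) x) ^ 2 - u x y ^ p
      = y ^ α * y ^ α / (y * y) *
        ((r ^ 2 * deriv (deriv φ) r * (α * (α - 1) * φ r - β * r * deriv φ r)) -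
          (-(α * (α - 1)) * r * φ r * deriv φ r +
            (α ^ 2 + β) * r ^ 2 * (deriv φ r) ^ 2 + φ r ^ p)) := by
    rw [hB, hD, hEE, hup, p1, p2, p3, p4, hrdef]
    field_simp
    ring
  constructor
  · intro h
    have h0 : y ^ α * y ^ α / (y * y) *
        ((r ^ 2 * deriv (deriv φ) r * (α * (α - 1) * φ r - β * r * deriv φ r)) -
          (-(α * (α - 1)) * r * φ r * deriv φ r +
            (α ^ 2 + β) * r ^ 2 * (deriv φ r) ^ 2 + φ r ^ p)) = 0 := by
      rw [← key, h, sub_self]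
    exact sub_eq_zero.mp ((mul_eq_zero.mp h0).resolve_left hfac)
  · intro h
    have h0 : deriv (deriv (fun t => u t y)) x * deriv (deriv (u x)) y -
        (deriv (fun t => deriv (u t) y) x) ^ 2 - u x y ^ p = 0 := by
      rw [key, sub_eq_zero_of_eq h, mul_zero]
    linarith [h0]

theorem stmt9 (p α β : ℝ) (hp : 0 < p) (hp2 : p < 2) (hα : α = 2 / (2 - p))
    (hscal : α * p = 2 * α - 2)
    (φ : ℝ → ℝ) (hφ : ContDiffOn ℝ 2 φ (Set.Ioi 0))
    (hφpos : ∀ r > (0 : ℝ), 0 < φ r)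
    (u : ℝ → ℝ → ℝ) (hu : ∀ x y, u x y = y ^ α * φ (Real.exp x * y ^ β)) :
    (∀ (x y : ℝ), 0 < y →
      deriv (deriv (fun t => u t y)) x * deriv (deriv (u x)) y -
        (deriv (fun t => deriv (u t) y) x) ^ 2 = u x y ^ p) ↔
    (∀ r > (0 : ℝ),
      r ^ 2 * deriv (deriv φ) r * (α * (α - 1) * φ r - β * r * deriv φ r) =
        -(α * (α - 1)) * r * φ r * deriv φ r +
          (α ^ 2 + β) * r ^ 2 * (deriv φ r) ^ 2 + φ r ^ p) := by
  have hd1 : ∀ r > (0:ℝ), HasDerivAt φ (deriv φ r) r := fun r hr =>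
    ((hφ.differentiableOn (by norm_num)).differentiableAt (Ioi_mem_nhds hr)).hasDerivAt
  have hder : ContDiffOn ℝ 1 (deriv φ) (Set.Ioi 0) :=
    hφ.deriv_of_isOpen isOpen_Ioi (by norm_num)
  have hd2 : ∀ r > (0:ℝ), HasDerivAt (deriv φ) (deriv (deriv φ) r) r := fun r hr =>
    ((hder.differentiableOn (by norm_num)).differentiableAt (Ioi_mem_nhds hr)).hasDerivAt
  constructor
  · intro H r hr
    have := (aux_main p α β hscal φ hφpos hd1 hd2 u hu (Real.log r) 1 one_pos).mp
      (H (Real.log r) 1 one_pos)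
    simpa [Real.one_rpow, Real.exp_log hr] using this
  · intro H x y hy
    exact (aux_main p α β hscal φ hφpos hd1 hd2 u hu x y hy).mpr
      (H _ (mul_pos (Real.exp_pos x) (Real.rpow_pos_of_pos hy β)))
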